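/- Let λ = a + b i + c j + d k be a quaternion with a, b, c, d ∈ ℝ and c² + d² ≠ 0. Set α = (b + sqrt(b² + c² + d²)) − d j + c k and β = α/|α|. Then α ≠ 0, |β| = 1, and conj(β) · λ · β = a + sqrt(b² + c² + d²) · i; in particular λ is similar (by a unit quaternion) to the complex number a + sqrt(b² + c² + d²) i lying in the closed upper half-plane. -/

import Mathlib

open Matrix Quaternion
open scoped Kronecker Quaternion

noncomputable section

/-- The 4×4 coefficient matrix of `J`. -/
def Jb : Matrix (Fin 4) (Fin 4) ℝ := !![0,0,-1,0; 0,0,0,-1; 1,0,0,0; 0,1,0,0]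
/-- The 4×4 coefficient matrix of `R`. -/
def Rb : Matrix (Fin 4) (Fin 4) ℝ := !![0,-1,0,0; 1,0,0,0; 0,0,0,1; 0,0,-1,0]
/-- The 4×4 coefficient matrix of `S`. -/
def Sb : Matrix (Fin 4) (Fin 4) ℝ := !![0,0,0,-1; 0,0,1,0; 0,-1,0,0; 1,0,0,0]

/-- `J_n = [[0,0,−I_n,0],[0,0,0,−I_n],[I_n,0,0,0],[0,I_n,0,0]]`. -/
def JJ (n : ℕ) : Matrix (Fin 4 × Fin n) (Fin 4 × Fin n) ℝ :=
  Jb ⊗ₖ (1 : Matrix (Fin n) (Fin n) ℝ)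
/-- `R_n = [[0,−I_n,0,0],[I_n,0,0,0],[0,0,0,I_n],[0,0,−I_n,0]]`. -/
def RRm (n : ℕ) : Matrix (Fin 4 × Fin n) (Fin 4 × Fin n) ℝ :=
  Rb ⊗ₖ (1 : Matrix (Fin n) (Fin n) ℝ)
/-- `S_n = [[0,0,0,−I_n],[0,0,I_n,0],[0,−I_n,0,0],[I_n,0,0,0]]`. -/
def SSm (n : ℕ) : Matrix (Fin 4 × Fin n) (Fin 4 × Fin n) ℝ :=
  Sb ⊗ₖ (1 : Matrix (Fin n) (Fin n) ℝ)

/-- A real 4m×4n matrix `M` is JRS-symmetric if `J_m M J_nᵀ = M`,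
`R_m M R_nᵀ = M` and `S_m M S_nᵀ = M`. -/
def JRSSymmetric {m n : ℕ} (M : Matrix (Fin 4 × Fin m) (Fin 4 × Fin n) ℝ) : Prop :=
  JJ m * M * (JJ n)ᵀ = M ∧ RRm m * M * (RRm n)ᵀ = M ∧ SSm m * M * (SSm n)ᵀ = M

/-- A real 4m×4n matrix `O` is JRS-symplectic if `O J_n Oᵀ = J_m`,
`O R_n Oᵀ = R_m` and `O S_n Oᵀ = S_m`. -/
def JRSSymplectic {m n : ℕ} (O : Matrix (Fin 4 × Fin m) (Fin 4 × Fin n) ℝ) : Prop :=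
  O * JJ n * Oᵀ = JJ m ∧ O * RRm n * Oᵀ = RRm m ∧ O * SSm n * Oᵀ = SSm m

/-- A real 4n×4n matrix is orthogonally JRS-symplectic if it is orthogonal
and JRS-symplectic. -/
def OrthoJRSSymplectic {n : ℕ} (W : Matrix (Fin 4 × Fin n) (Fin 4 × Fin n) ℝ) : Prop :=
  Wᵀ * W = 1 ∧ JRSSymplectic W

/-- The 4m×4n block matrix
`[[Q₀,Q₂,Q₁,Q₃],[−Q₂,Q₀,Q₃,−Q₁],[−Q₁,−Q₃,Q₀,Q₂],[−Q₃,Q₁,−Q₂,Q₀]]`. -/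
def upsilonBlocks {m n : ℕ} (Q0 Q1 Q2 Q3 : Matrix (Fin m) (Fin n) ℝ) :
    Matrix (Fin 4 × Fin m) (Fin 4 × Fin n) ℝ := fun p q =>
  !![Q0 p.2 q.2, Q2 p.2 q.2, Q1 p.2 q.2, Q3 p.2 q.2;
     -(Q2 p.2 q.2), Q0 p.2 q.2, Q3 p.2 q.2, -(Q1 p.2 q.2);
     -(Q1 p.2 q.2), -(Q3 p.2 q.2), Q0 p.2 q.2, Q2 p.2 q.2;
     -(Q3 p.2 q.2), Q1 p.2 q.2, -(Q2 p.2 q.2), Q0 p.2 q.2] p.1 q.1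

/-- The real counterpart `Υ_Q` of a quaternion matrix `Q`. -/
def Upsilon {m n : ℕ} (Q : Matrix (Fin m) (Fin n) ℍ[ℝ]) :
    Matrix (Fin 4 × Fin m) (Fin 4 × Fin n) ℝ :=
  upsilonBlocks (fun i j => (Q i j).re) (fun i j => (Q i j).imI)
    (fun i j => (Q i j).imJ) (fun i j => (Q i j).imK)

/-- Upper Hessenberg: zero below the first subdiagonal. -/
def UpperHessenbergM {n : ℕ} (A : Matrix (Fin n) (Fin n) ℝ) : Prop :=
  ∀ i j : Fin n, (j : ℕ) + 1 < (i : ℕ) → A i j = 0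

/-- Upper triangular: zero below the diagonal. -/
def UpperTriangularM {m n : ℕ} (A : Matrix (Fin m) (Fin n) ℝ) : Prop :=
  ∀ (i : Fin m) (j : Fin n), (j : ℕ) < (i : ℕ) → A i j = 0

/-- Strictly upper triangular: zero on and below the diagonal. -/
def StrictlyUpperTriangularM {m n : ℕ} (A : Matrix (Fin m) (Fin n) ℝ) : Prop :=
  ∀ (i : Fin m) (j : Fin n), (j : ℕ) ≤ (i : ℕ) → A i j = 0

/-- Tridiagonal: zero outside the three central diagonals. -/
def TridiagonalM {n : ℕ} (A : Matrix (Fin n) (Fin n) ℝ) : Prop :=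
  ∀ i j : Fin n, ((i : ℕ) + 1 < (j : ℕ) ∨ (j : ℕ) + 1 < (i : ℕ)) → A i j = 0

/-- A quaternion `λ = a + bi + cj + dk` with `c² + d² ≠ 0` is
similar, via the unit quaternion `β = α/|α|` with
`α = (b + √(b²+c²+d²)) − d j + c k`, to the standard complex eigenvalue
`a + √(b²+c²+d²) i`. -/
theorem quaternion_similar_standard (a b c d : ℝ) (h : c ^ 2 + d ^ 2 ≠ 0) :
    let α : ℍ[ℝ] := ⟨b + Real.sqrt (b ^ 2 + c ^ 2 + d ^ 2), 0, -d, c⟩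
    let β : ℍ[ℝ] := ‖α‖⁻¹ • α
    let lam : ℍ[ℝ] := ⟨a, b, c, d⟩
    α ≠ 0 ∧ ‖β‖ = 1 ∧
      star β * lam * β = (⟨a, Real.sqrt (b ^ 2 + c ^ 2 + d ^ 2), 0, 0⟩ : ℍ[ℝ]) := by
  intro α β lam
  have hcd : 0 < c ^ 2 + d ^ 2 := lt_of_le_of_ne (by positivity) (Ne.symm h)
  set s : ℝ := Real.sqrt (b ^ 2 + c ^ 2 + d ^ 2) with hs_def
  have hs_nonneg : 0 ≤ s := Real.sqrt_nonneg _
  have hs2 : s ^ 2 = b ^ 2 + c ^ 2 + d ^ 2 := Real.sq_sqrt (by positivity)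
  have hsb : 0 < s + b := by nlinarith [hs2, hcd, hs_nonneg, sq_nonneg (s - b), sq_nonneg (s + b)]
  have hspos : 0 < s := by nlinarith
  have hα : α ≠ 0 := by
    intro hz
    have hc : c = 0 := congrArg QuaternionAlgebra.imK hz
    have hd : -d = 0 := congrArg QuaternionAlgebra.imJ hz
    apply h
    rw [hc]; nlinarith
  have hnormsq : ‖α‖ ^ 2 = 2 * s * (s + b) := by
    rw [sq, ← normSq_eq_norm_mul_self]
    show normSq (⟨b + s, 0, -d, c⟩ : ℍ[ℝ]) = _
    erw [normSq_def']
    show (b + s) ^ 2 + 0 ^ 2 + (-d) ^ 2 + c ^ 2 = _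
    linear_combination -hs2
  have hnorm_ne : ‖α‖ ≠ 0 := norm_ne_zero_iff.mpr hα
  refine ⟨hα, ?_, ?_⟩
  · show ‖(‖α‖⁻¹ • α)‖ = 1
    rw [norm_smul, norm_inv, norm_norm, inv_mul_cancel₀ hnorm_ne]
  · have key : star α * lam * α = (2 * s * (s + b)) • (⟨a, s, 0, 0⟩ : ℍ[ℝ]) := by
      ext <;>
        simp only [Quaternion.re_mul, Quaternion.imI_mul, Quaternion.imJ_mul,
          Quaternion.imK_mul, QuaternionAlgebra.smul_mk, Quaternion.re_smul, Quaternion.imI_smul,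
          Quaternion.imJ_smul, Quaternion.imK_smul, Quaternion.re_star,
          Quaternion.imI_star, Quaternion.imJ_star, Quaternion.imK_star,
          smul_eq_mul] <;>
        simp only [α, lam] <;>
        rw [← hs_def]
      · linear_combination (-a) * hs2
      · linear_combination (-(2 * s + b)) * hs2
      · linear_combination c * hs2
      · linear_combination d * hs2
    show star (‖α‖⁻¹ • α) * lam * (‖α‖⁻¹ • α) = _
    erw [Quaternion.star_smul, smul_mul_assoc, smul_mul_assoc, mul_smul_comm,
      key, smul_smul, smul_smul]
    have h1 : ‖α‖⁻¹ * ‖α‖⁻¹ * (2 * s * (s + b)) = 1 := by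
      rw [← hnormsq]; field_simp
    erw [h1, one_smul]
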